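/- Let α ≥ r > 0. If Y is exponential with rate α and U is independent of Y with law Bernoulli(1 − r/α) times an independent exponential of rate r (i.e., U = B·E with B ~ Ber(1 − r/α), E ~ Exp(r) independent), then Y + U is exponential with rate r. -/

import Mathlib

open MeasureTheory ProbabilityTheory Real Set

lemma stmt12_exp_apply_Iic {r : ℝ} (hr : 0 < r) (s : ℝ) :
    expMeasure r (Iic s) = ENNReal.ofReal (if 0 ≤ s then 1 - rexp (-(r * s)) else 0) := by
  have : expMeasure r = MeasureTheory.volume.withDensity (exponentialPDF r) := rfl
  rw [this, withDensity_apply _ measurableSet_Iic,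
    lintegral_exponentialPDF_eq_antiDeriv hr s]

lemma stmt12_interval {r a : ℝ} (hr : 0 < r) (ha : r ≤ a) (t : ℝ) (_ht : 0 ≤ t) :
    ∫ x in (0)..t, a * rexp (-(a*x)) * (1 - (1 - r/a) * rexp (-(r*(t-x))))
      = 1 - rexp (-(r*t)) := by
  have ha0 : 0 < a := lt_of_lt_of_le hr ha
  have key : ∀ x ∈ uIcc (0:ℝ) t, HasDerivAt
      (fun x => -rexp (-(a*x)) + rexp (-(r*t)) * rexp (-((a-r)*x)))
      (a * rexp (-(a*x)) * (1 - (1 - r/a) * rexp (-(r*(t-x))))) x := by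
    intro x _
    have h1 : HasDerivAt (fun x => -rexp (-(a*x))) (a * rexp (-(a*x))) x :=
      hasDerivAt_neg_exp_mul_exp
    have h2 : HasDerivAt (fun x => rexp (-(r*t)) * rexp (-((a-r)*x)))
        (-(rexp (-(r*t)) * ((a-r) * rexp (-((a-r)*x))))) x := by
      simpa [Pi.neg_def, mul_neg, neg_neg] using
        ((hasDerivAt_neg_exp_mul_exp (r := a - r) (x := x)).const_mul (rexp (-(r*t)))).neg
    refine (h1.add h2).congr_deriv ?_
    have hexp : rexp (-(r*(t-x))) = rexp (-(r*t)) * rexp (-((a-r)*x)) / rexp (-(a*x)) := by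
      rw [eq_div_iff (exp_ne_zero _), ← exp_add, ← exp_add]; ring_nf
    rw [hexp]
    field_simp
    ring
  rw [intervalIntegral.integral_eq_sub_of_hasDerivAt key
    (by apply Continuous.intervalIntegrable; fun_prop)]
  have : rexp (-(r*t)) * rexp (-((a-r)*t)) = rexp (-(a*t)) := by
    rw [← exp_add]; ring_nf
  simp only [mul_zero, neg_zero, Real.exp_zero, mul_one]
  rw [this]; ring

theorem stmt_12 {Ω : Type*} [MeasurableSpace Ω] (P : Measure Ω) [IsProbabilityMeasure P]
    (r a : ℝ) (hr : 0 < r) (ha : r ≤ a)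
    (Y U : Ω → ℝ) (hY : Measurable Y) (hU : Measurable U)
    (hind : IndepFun Y U P)
    (hYlaw : P.map Y = expMeasure a)
    (hUlaw : P.map U =
      ENNReal.ofReal (r / a) • (Measure.dirac (0 : ℝ)) +
        ENNReal.ofReal (1 - r / a) • expMeasure r) :
    P.map (fun ω => Y ω + U ω) = expMeasure r := by
  have ha0 : 0 < a := lt_of_lt_of_le hr ha
  have hra : 0 ≤ 1 - r / a := by
    rw [sub_nonneg, div_le_one ha0]; exact ha
  -- law of U applied to Iic
  have hexpP : IsProbabilityMeasure (expMeasure r) := isProbabilityMeasure_expMeasure hr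
  have hexpPa : IsProbabilityMeasure (expMeasure a) := isProbabilityMeasure_expMeasure ha0
  have hνIic : ∀ s : ℝ, (P.map U) (Iic s)
      = ENNReal.ofReal (if 0 ≤ s then 1 - (1 - r/a) * rexp (-(r*s)) else 0) := by
    intro s
    rw [hUlaw]
    rw [Measure.add_apply, Measure.smul_apply, Measure.smul_apply, smul_eq_mul, smul_eq_mul,
      stmt12_exp_apply_Iic hr s, Measure.dirac_apply' _ measurableSet_Iic]
    by_cases hs : 0 ≤ s
    · rw [if_pos hs, if_pos hs]
      rw [Set.indicator_of_mem (by simpa using hs)]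
      simp only [Pi.one_apply, mul_one]
      rw [← ENNReal.ofReal_mul hra, ← ENNReal.ofReal_add (by positivity)
        (by
          have h1 : rexp (-(r*s)) ≤ 1 := exp_le_one_iff.2 (by nlinarith)
          nlinarith)]
      congr 1
      field_simp
      ring
    · rw [if_neg hs, if_neg hs]
      rw [Set.indicator_of_notMem (by simpa using hs)]
      simp
  -- convolution representation
  have hmap : P.map (fun ω => Y ω + U ω)
      = Measure.map (fun p : ℝ × ℝ => p.1 + p.2) ((P.map Y).prod (P.map U)) := by
    rw [← (indepFun_iff_map_prod_eq_prod_map_map hY.aemeasurable hU.aemeasurable).mp hind,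
      Measure.map_map measurable_add (hY.prodMk hU)]
    rfl
  have hμ : IsProbabilityMeasure (P.map Y) := Measure.isProbabilityMeasure_map hY.aemeasurable
  have hν : IsProbabilityMeasure (P.map U) := Measure.isProbabilityMeasure_map hU.aemeasurable
  rw [hmap]
  have : IsProbabilityMeasure (Measure.map (fun p : ℝ × ℝ => p.1 + p.2)
      ((P.map Y).prod (P.map U))) := Measure.isProbabilityMeasure_map measurable_add.aemeasurable
  refine MeasureTheory.Measure.ext_of_Iic _ _ (fun t => ?_)
  rw [stmt12_exp_apply_Iic hr t]
  rw [Measure.map_apply measurable_add measurableSet_Iic]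
  have hpre : (fun p : ℝ × ℝ => p.1 + p.2) ⁻¹' (Iic t) = {p : ℝ × ℝ | p.1 + p.2 ≤ t} := rfl
  rw [hpre, Measure.prod_apply (by exact measurable_add measurableSet_Iic)]
  have hfib : ∀ x : ℝ, (Prod.mk x ⁻¹' {p : ℝ × ℝ | p.1 + p.2 ≤ t}) = Iic (t - x) := by
    intro x; ext y; simp [Set.mem_Iic, le_sub_iff_add_le']
  simp_rw [hfib, hνIic]
  -- now integrate against the law of Y
  rw [hYlaw]
  have hYd : expMeasure a = MeasureTheory.volume.withDensity (exponentialPDF a) := rfl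
  rw [hYd]
  have hGm : Measurable fun x : ℝ =>
      ENNReal.ofReal (if 0 ≤ t - x then 1 - (1 - r/a) * rexp (-(r*(t-x))) else 0) := by
    apply Measurable.ennreal_ofReal
    apply Measurable.ite (measurableSet_le measurable_const (by fun_prop)) (by fun_prop)
      measurable_const
  have hpdfm : Measurable (exponentialPDF a) := (measurable_exponentialPDFReal a).ennreal_ofReal
  rw [lintegral_withDensity_eq_lintegral_mul _ hpdfm hGm]
  -- turn into a real integral
  set f : ℝ → ℝ := (Set.Icc (0:ℝ) t).indicator
      (fun x => a * rexp (-(a*x)) * (1 - (1 - r/a) * rexp (-(r*(t-x))))) with hf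
  have hfle : ∀ x, (exponentialPDF a * fun x =>
      ENNReal.ofReal (if 0 ≤ t - x then 1 - (1 - r/a) * rexp (-(r*(t-x))) else 0)) x
      = ENNReal.ofReal (f x) := by
    intro x
    simp only [Pi.mul_apply, exponentialPDF_eq]
    rw [← ENNReal.ofReal_mul (by positivity)]
    congr 1
    by_cases hx0 : 0 ≤ x
    · by_cases hxt : x ≤ t
      · rw [if_pos hx0, if_pos (by linarith : (0:ℝ) ≤ t - x), hf,
          Set.indicator_of_mem (Set.mem_Icc.mpr ⟨hx0, hxt⟩)]
      · rw [if_pos hx0, if_neg (not_le.mpr (by linarith : t - x < 0)), mul_zero, hf,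
          Set.indicator_of_notMem (fun h => hxt (Set.mem_Icc.mp h).2)]
    · rw [if_neg hx0, zero_mul, hf,
        Set.indicator_of_notMem (fun h => hx0 (Set.mem_Icc.mp h).1)]
  simp_rw [hfle]
  have hf_nonneg : 0 ≤ f := by
    intro x
    rw [hf]
    apply Set.indicator_nonneg
    intro y hy
    have h1 : rexp (-(r*(t-y))) ≤ 1 := exp_le_one_iff.2 (by nlinarith [hy.1, hy.2])
    have h2 : (1 - r/a) * rexp (-(r*(t-y))) ≤ 1 :=
      mul_le_one₀ (by linarith [div_pos hr ha0]) (exp_nonneg _) h1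
    have h3 : 0 ≤ a * rexp (-(a*y)) := by positivity
    exact mul_nonneg h3 (by linarith)
  have hf_int : Integrable f := by
    rw [hf]
    apply (Continuous.integrableOn_Icc (by fun_prop)).integrable_indicator measurableSet_Icc
  rw [← ofReal_integral_eq_lintegral_ofReal hf_int (Filter.Eventually.of_forall hf_nonneg)]
  congr 1
  rw [hf, MeasureTheory.integral_indicator measurableSet_Icc]
  by_cases ht : 0 ≤ t
  · rw [if_pos ht, MeasureTheory.integral_Icc_eq_integral_Ioc,
      ← intervalIntegral.integral_of_le ht]
    exact stmt12_interval hr ha t ht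
  · rw [if_neg ht, Set.Icc_eq_empty (by linarith), Measure.restrict_empty, integral_zero_measure]
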